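/- Suppose w is a nonnegative locally integrable function on ℝ^n such that C_w(α) − 1 ≤ B (1−α)^{1/β} whenever α > 1 − e^{−β}, for some constants B, β ≥ 1, where C_w(α) = sup_{E : 0<|E|<∞} w({M χ_E > α})/w(E) and M is the Lebesgue Hardy–Littlewood maximal operator over cubes. Then for every cube Q and every measurable S ⊆ Q with |S|/|Q| < e^{−β}, one has w(S)/w(Q) ≤ B (|S|/|Q|)^{1/β}. -/

import Mathlib

open MeasureTheory Metric Set
open scoped ENNReal

/-- The measure `w dx` associated to a weight `w` on ℝⁿ. -/
noncomputable def weightMeasure (n : ℕ) (w : (Fin n → ℝ) → ℝ≥0∞) : Measure (Fin n → ℝ) :=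
  MeasureTheory.volume.withDensity w

/-- The superlevel set {M χ_E > α} of the uncentered Lebesgue Hardy–Littlewood maximal
operator over cubes (closed balls in the sup metric) applied to the indicator of E. -/
def maxLevelSet (n : ℕ) (E : Set (Fin n → ℝ)) (α : ℝ) : Set (Fin n → ℝ) :=
  {x | ∃ (c : Fin n → ℝ) (r : ℝ), 0 < r ∧ x ∈ closedBall c r ∧
    ENNReal.ofReal α * volume (closedBall c r) < volume (closedBall c r ∩ E)}

/-- If a weight w satisfies the Solyanik-type Tauberian estimate
C_w(α) − 1 ≤ B (1−α)^{1/β} for α > 1 − e^{−β}, then for every cube Q and measurable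
S ⊆ Q with |S|/|Q| < e^{−β} one has w(S)/w(Q) ≤ B (|S|/|Q|)^{1/β}. -/
theorem tauberian_implies_growth (n : ℕ) (w : (Fin n → ℝ) → ℝ≥0∞) (hw : Measurable w)
    (hfin : ∀ (c : Fin n → ℝ) (r : ℝ), 0 < r → weightMeasure n w (closedBall c r) < ⊤)
    (B β : ℝ) (hB : 1 ≤ B) (hβ : 1 ≤ β)
    (htaub : ∀ α : ℝ, 1 - Real.exp (-β) < α → α < 1 →
      ∀ E : Set (Fin n → ℝ), MeasurableSet E → 0 < volume E → volume E < ⊤ →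
        weightMeasure n w (maxLevelSet n E α) ≤
          (1 + ENNReal.ofReal (B * (1 - α) ^ (1 / β))) * weightMeasure n w E) :
    ∀ (c : Fin n → ℝ) (r : ℝ), 0 < r → ∀ S ⊆ closedBall c r, MeasurableSet S →
      volume S / volume (closedBall c r) < ENNReal.ofReal (Real.exp (-β)) →
      weightMeasure n w S ≤
        ENNReal.ofReal B * (volume S / volume (closedBall c r)) ^ (1 / β) *
          weightMeasure n w (closedBall c r) := by
  intro c r hr S hSQ hSm hSsmall
  set Q := closedBall c r with hQ
  have hQm : MeasurableSet Q := measurableSet_closedBall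
  have hQpos : 0 < volume Q := measure_closedBall_pos _ _ hr
  have hQfin : volume Q < ⊤ := measure_closedBall_lt_top
  have hwQfin : weightMeasure n w Q < ⊤ := hfin c r hr
  have hβpos : (0:ℝ) < β := lt_of_lt_of_le one_pos hβ
  have hβinv : (0:ℝ) < 1/β := by positivity
  have hBpos : (0:ℝ) < B := lt_of_lt_of_le one_pos hB
  -- trivial case volume S = 0
  rcases eq_or_lt_of_le (zero_le : (0:ℝ≥0∞) ≤ volume S) with h0 | hSpos
  · have hz : weightMeasure n w S = 0 :=
      (MeasureTheory.withDensity_absolutelyContinuous volume w) h0.symm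
    simp [hz]
  -- notation
  set q := (volume Q).toReal with hq
  set s := (volume S).toReal with hs
  have hqpos : 0 < q := ENNReal.toReal_pos hQpos.ne' hQfin.ne
  have hSfin : volume S < ⊤ := lt_of_le_of_lt (measure_mono hSQ) hQfin
  have hspos : 0 < s := ENNReal.toReal_pos hSpos.ne' hSfin.ne
  have hvolS : volume S = ENNReal.ofReal s := (ENNReal.ofReal_toReal hSfin.ne).symm
  have hvolQ : volume Q = ENNReal.ofReal q := (ENNReal.ofReal_toReal hQfin.ne).symm
  have hratio : volume S / volume Q = ENNReal.ofReal (s / q) := by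
    rw [hvolS, hvolQ, ← ENNReal.ofReal_div_of_pos hqpos]
  have hsq_lt : s / q < Real.exp (-β) := by
    rw [hratio] at hSsmall
    exact (ENNReal.ofReal_lt_ofReal_iff (Real.exp_pos _)).mp hSsmall
  have hsqpos : 0 < s / q := div_pos hspos hqpos
  have hexp_lt_one : Real.exp (-β) < 1 := Real.exp_lt_one_iff.mpr (by linarith)
  -- key estimate for every u in (s/q, exp (-β))
  have key : ∀ u : ℝ, s / q < u → u < Real.exp (-β) →
      weightMeasure n w S ≤ ENNReal.ofReal (B * u ^ (1/β)) * weightMeasure n w Q := by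
    intro u hu1 hu2
    have hupos : 0 < u := lt_trans hsqpos hu1
    have hu_lt_one : u < 1 := lt_trans hu2 hexp_lt_one
    set α := 1 - u with hα
    have hα1 : 1 - Real.exp (-β) < α := by simp only [hα]; linarith
    have hα2 : α < 1 := by simp only [hα]; linarith
    have hαpos : 0 < α := by simp only [hα]; linarith
    set E := Q \ S with hE
    have hEm : MeasurableSet E := hQm.diff hSm
    have hvolE : volume E = volume Q - volume S :=
      measure_diff hSQ hSm.nullMeasurableSet hSfin.ne
    have hs_lt_uq : s < u * q := by
      have := (div_lt_iff₀ hqpos).mp hu1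
      linarith
    have hSltQ : volume S < volume Q := by
      rw [hvolS, hvolQ]
      refine (ENNReal.ofReal_lt_ofReal_iff hqpos).mpr ?_
      nlinarith
    have hEpos : 0 < volume E := by
      rw [hvolE]
      exact tsub_pos_iff_lt.mpr hSltQ
    have hEfin : volume E < ⊤ := lt_of_le_of_lt (measure_mono diff_subset) hQfin
    -- Q is contained in the level set
    have hQsub : Q ⊆ maxLevelSet n E α := by
      intro x hx
      refine ⟨c, r, hr, hx, ?_⟩
      have hQE : closedBall c r ∩ E = E :=
        inter_eq_self_of_subset_right diff_subset
      rw [hQE, ← hQ, hvolE, hvolS, hvolQ, ← ENNReal.ofReal_sub q hspos.le,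
        ← ENNReal.ofReal_mul hαpos.le]
      refine (ENNReal.ofReal_lt_ofReal_iff (by nlinarith)).mpr ?_
      simp only [hα]
      nlinarith
    have htb := htaub α hα1 hα2 E hEm hEpos hEfin
    have h1α : 1 - α = u := by simp [hα]
    rw [h1α] at htb
    have hsplit : weightMeasure n w S + weightMeasure n w E = weightMeasure n w Q := by
      rw [hE]
      rw [measure_add_diff hSm.nullMeasurableSet Q, union_eq_self_of_subset_left hSQ]
    have hwEfin : weightMeasure n w E ≠ ⊤ :=
      (lt_of_le_of_lt (measure_mono diff_subset) hwQfin).ne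
    have hchain : weightMeasure n w E + weightMeasure n w S ≤
        weightMeasure n w E + ENNReal.ofReal (B * u ^ (1/β)) * weightMeasure n w E := by
      calc weightMeasure n w E + weightMeasure n w S = weightMeasure n w Q := by
            rw [add_comm]; exact hsplit
        _ ≤ weightMeasure n w (maxLevelSet n E α) := measure_mono hQsub
        _ ≤ (1 + ENNReal.ofReal (B * u ^ (1/β))) * weightMeasure n w E := htb
        _ = weightMeasure n w E + ENNReal.ofReal (B * u ^ (1/β)) * weightMeasure n w E := by
            rw [add_mul, one_mul]
    have hfinal := (ENNReal.add_le_add_iff_left hwEfin).mp hchain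
    exact le_trans hfinal (mul_le_mul_right (measure_mono diff_subset) _)
  -- pass to the limit u → (s/q)⁺
  have hcont : ContinuousAt (fun u : ℝ => ENNReal.ofReal (B * u ^ (1/β))) (s/q) :=
    ENNReal.continuous_ofReal.continuousAt.comp
      (continuousAt_const.mul (Real.continuousAt_rpow_const _ _ (Or.inl hsqpos.ne')))
  have hlim : Filter.Tendsto
      (fun u : ℝ => ENNReal.ofReal (B * u ^ (1/β)) * weightMeasure n w Q)
      (nhdsWithin (s/q) (Set.Ioi (s/q)))
      (nhds (ENNReal.ofReal (B * (s/q) ^ (1/β)) * weightMeasure n w Q)) := by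
    exact ENNReal.Tendsto.mul_const (hcont.tendsto.mono_left nhdsWithin_le_nhds)
      (Or.inr hwQfin.ne)
  have hwS_le : weightMeasure n w S ≤
      ENNReal.ofReal (B * (s/q) ^ (1/β)) * weightMeasure n w Q := by
    refine ge_of_tendsto hlim ?_
    filter_upwards [Ioo_mem_nhdsGT_of_mem ⟨le_refl _, hsq_lt⟩] with u hu
    exact key u hu.1 hu.2
  rw [hratio, ENNReal.ofReal_rpow_of_nonneg hsqpos.le hβinv.le,
    ← ENNReal.ofReal_mul hBpos.le]
  exact hwS_le
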